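/- For every real number ε with 0 ≤ ε < 3/10, there exists a finite set P ⊂ ℝ² such that for every subset Q ⊆ P with |Q| ≤ 4 there exists an axis-parallel rectangle R with R ∩ Q = ∅ and |R ∩ P| > ε·|P|. Hence no strong ε-net of size 4 with ε < 3/10 exists for axis-parallel rectangles, i.e., ε_4^R ≥ 3/10. -/

import Mathlib

/-- An axis-parallel rectangle in ℝ²: a product of closed intervals. -/
def IsRect (R : Set (EuclideanSpace ℝ (Fin 2))) : Prop :=
  ∃ a b c d : ℝ, R = {x | a ≤ x 0 ∧ x 0 ≤ b ∧ c ≤ x 1 ∧ x 1 ≤ d}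

/-- y-coordinates of our 10-point configuration: 7,9,3,4,6,1,5,0,8,2
(the x-coordinate of point `m` is `m` itself). -/
def ycoord (m : Fin 10) : ℕ := 2805164397 / 10 ^ m.val % 10

/-- `m` lies in the bounding box of points `i`, `j`, `k`. -/
def inBoxB (m i j k : Fin 10) : Bool :=
  decide (min i.val (min j.val k.val) ≤ m.val) &&
  decide (m.val ≤ max i.val (max j.val k.val)) &&
  decide (min (ycoord i) (min (ycoord j) (ycoord k)) ≤ ycoord m) &&
  decide (ycoord m ≤ max (ycoord i) (max (ycoord j) (ycoord k)))

/-- Covering list of triples: every 4-element subset of `Fin 10` is disjoint from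
one of these triples, and each triple's bounding box contains exactly the triple. -/
def L : List (Fin 10 × Fin 10 × Fin 10) :=
  [(0,1,2),(3,4,5),(6,7,8),(2,3,9),(4,6,9),(5,7,9),(0,4,8),(0,1,3),
   (5,6,8),(2,5,7),(1,4,8),(0,4,6),(1,2,3)]

/-- `m` is none of the three members of the triple `t`. -/
def avoids (t : Fin 10 × Fin 10 × Fin 10) (m : Fin 10) : Bool :=
  (m != t.1) && (m != t.2.1) && (m != t.2.2)

lemma L_distinct_bool :
    (L.all fun t => (t.1 != t.2.1) && (t.1 != t.2.2) && (t.2.1 != t.2.2)) = true := by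
  decide

/-- A point is in the bounding box of a triple of `L` iff it is a member of
the triple. -/
lemma box_eq_bool :
    (L.all fun t => (List.finRange 10).all fun m =>
      inBoxB m t.1 t.2.1 t.2.2 == !(avoids t m)) = true := by
  decide

/-- Every four points of `Fin 10` are avoided by some triple in `L`. -/
lemma key_bool :
    ((List.finRange 10).all fun a => (List.finRange 10).all fun b =>
      (List.finRange 10).all fun c => (List.finRange 10).all fun d =>
      L.any fun t => avoids t a && avoids t b && avoids t c && avoids t d) = true := by
  decide

lemma keyB (a b c d : Fin 10) : ∃ t ∈ L,
    avoids t a = true ∧ avoids t b = true ∧ avoids t c = true ∧ avoids t d = true := by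
  have h := key_bool
  simp only [List.all_eq_true, List.mem_finRange, forall_const] at h
  have h2 := h a b c d
  rw [List.any_eq_true] at h2
  obtain ⟨t, htL, ht⟩ := h2
  simp only [Bool.and_eq_true] at ht
  exact ⟨t, htL, ht.1.1.1, ht.1.1.2, ht.1.2, ht.2⟩

lemma box_eq (t : Fin 10 × Fin 10 × Fin 10) (htL : t ∈ L) (m : Fin 10) :
    inBoxB m t.1 t.2.1 t.2.2 = !(avoids t m) := by
  have h := box_eq_bool
  simp only [List.all_eq_true, List.mem_finRange, forall_const, beq_iff_eq] at h
  exact h t htL m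

lemma L_distinct (t : Fin 10 × Fin 10 × Fin 10) (htL : t ∈ L) :
    t.1 ≠ t.2.1 ∧ t.1 ≠ t.2.2 ∧ t.2.1 ≠ t.2.2 := by
  have h := L_distinct_bool
  simp only [List.all_eq_true, Bool.and_eq_true, bne_iff_ne] at h
  exact ⟨(h t htL).1.1, (h t htL).1.2, (h t htL).2⟩

noncomputable def fpt (n : Fin 10) : EuclideanSpace ℝ (Fin 2) :=
  WithLp.toLp 2 ![(n.val : ℝ), (ycoord n : ℝ)]

lemma fpt_zero (n : Fin 10) : fpt n 0 = (n.val : ℝ) := rfl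
lemma fpt_one (n : Fin 10) : fpt n 1 = (ycoord n : ℝ) := rfl

lemma fpt_inj : Function.Injective fpt := by
  intro a b h
  have h0 : fpt a 0 = fpt b 0 := by rw [h]
  rw [fpt_zero, fpt_zero] at h0
  exact Fin.val_injective (Nat.cast_injective h0)

lemma self_box1 (i j k : Fin 10) : inBoxB i i j k = true := by
  simp only [inBoxB, Bool.and_eq_true, decide_eq_true_eq]
  exact ⟨⟨⟨min_le_left _ _, le_max_left _ _⟩, min_le_left _ _⟩, le_max_left _ _⟩

lemma self_box2 (i j k : Fin 10) : inBoxB j i j k = true := by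
  simp only [inBoxB, Bool.and_eq_true, decide_eq_true_eq]
  exact ⟨⟨⟨(min_le_right _ _).trans (min_le_left _ _),
    (le_max_left _ _).trans (le_max_right _ _)⟩,
    (min_le_right _ _).trans (min_le_left _ _)⟩,
    (le_max_left _ _).trans (le_max_right _ _)⟩

lemma self_box3 (i j k : Fin 10) : inBoxB k i j k = true := by
  simp only [inBoxB, Bool.and_eq_true, decide_eq_true_eq]
  exact ⟨⟨⟨(min_le_right _ _).trans (min_le_right _ _),
    (le_max_right _ _).trans (le_max_right _ _)⟩,
    (min_le_right _ _).trans (min_le_right _ _)⟩,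
    (le_max_right _ _).trans (le_max_right _ _)⟩

/-- Lower bound: no strong ε-net of size 4 with ε < 3 / 10 exists for axis-parallel
rectangles, i.e. ε_4^R ≥ 3 / 10. -/
theorem epsR_four_lower (ε : ℝ) (hε0 : 0 ≤ ε) (hε : ε < 3 / 10) :
    ∃ P : Finset (EuclideanSpace ℝ (Fin 2)),
      ∀ Q : Finset (EuclideanSpace ℝ (Fin 2)), Q ⊆ P → Q.card ≤ 4 →
        ∃ R : Set (EuclideanSpace ℝ (Fin 2)), IsRect R ∧ (∀ q ∈ Q, q ∉ R) ∧
          ε * P.card < ((R ∩ ↑P).ncard : ℝ) := by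
  classical
  refine ⟨Finset.univ.image fpt, ?_⟩
  set P : Finset (EuclideanSpace ℝ (Fin 2)) := Finset.univ.image fpt with hP
  have hPcard : P.card = 10 := by
    rw [hP, Finset.card_image_of_injective _ fpt_inj, Finset.card_univ, Fintype.card_fin]
  intro Q hQP hQ4
  -- index set of Q
  set Q' : Finset (Fin 10) := Finset.univ.filter (fun n => fpt n ∈ Q) with hQ'
  have hQ'card : Q'.card ≤ 4 := by
    have himg : Q'.image fpt ⊆ Q := by
      intro q hq
      obtain ⟨n, hn, rfl⟩ := Finset.mem_image.1 hq
      exact (Finset.mem_filter.1 hn).2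
    calc Q'.card = (Q'.image fpt).card :=
          (Finset.card_image_of_injective _ fpt_inj).symm
      _ ≤ Q.card := Finset.card_le_card himg
      _ ≤ 4 := hQ4
  obtain ⟨Q'', hQ'sub, hQ''card⟩ :=
    Finset.exists_superset_card_eq hQ'card (by simp)
  -- name the four elements of Q''
  obtain ⟨a, ha⟩ : Q''.Nonempty := Finset.card_pos.1 (by omega)
  have h3 : (Q''.erase a).card = 3 := by
    rw [Finset.card_erase_of_mem ha, hQ''card]
  obtain ⟨b, c, d, _, _, _, hbcd⟩ := Finset.card_eq_three.1 h3
  have hmemQ'' : ∀ m ∈ Q'', m = a ∨ m = b ∨ m = c ∨ m = d := by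
    intro m hm
    by_cases hma : m = a
    · exact Or.inl hma
    · have : m ∈ Q''.erase a := Finset.mem_erase.2 ⟨hma, hm⟩
      rw [hbcd] at this
      simp only [Finset.mem_insert, Finset.mem_singleton] at this
      tauto
  obtain ⟨t, htL, hta, htb, htc, htd⟩ := keyB a b c d
  obtain ⟨hij, hik, hjk⟩ := L_distinct t htL
  set i := t.1; set j := t.2.1; set k := t.2.2
  -- rectangle bounds
  set A : ℝ := ((min i.val (min j.val k.val) : ℕ) : ℝ) with hA
  set B : ℝ := ((max i.val (max j.val k.val) : ℕ) : ℝ) with hB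
  set C : ℝ := ((min (ycoord i) (min (ycoord j) (ycoord k)) : ℕ) : ℝ) with hC
  set D : ℝ := ((max (ycoord i) (max (ycoord j) (ycoord k)) : ℕ) : ℝ) with hD
  set R : Set (EuclideanSpace ℝ (Fin 2)) :=
    {x | A ≤ x 0 ∧ x 0 ≤ B ∧ C ≤ x 1 ∧ x 1 ≤ D} with hR
  have hmem_iff : ∀ m : Fin 10, fpt m ∈ R ↔ inBoxB m i j k = true := by
    intro m
    simp only [hR, Set.mem_setOf_eq, fpt_zero, fpt_one, hA, hB, hC, hD,
      inBoxB, Bool.and_eq_true, decide_eq_true_eq, Nat.cast_le]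
    tauto
  refine ⟨R, ⟨A, B, C, D, rfl⟩, ?_, ?_⟩
  · -- rectangle avoids Q
    intro q hq hqR
    obtain ⟨m, _, rfl⟩ := Finset.mem_image.1 (hQP hq)
    have hmQ' : m ∈ Q' := Finset.mem_filter.2 ⟨Finset.mem_univ _, hq⟩
    have hm4 := hmemQ'' m (hQ'sub hmQ')
    have hav : avoids t m = true := by
      rcases hm4 with rfl | rfl | rfl | rfl
      exacts [hta, htb, htc, htd]
    have hfalse : inBoxB m i j k = false := by
      rw [box_eq t htL m, hav]; rfl
    rw [(hmem_iff m).1 hqR] at hfalse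
    exact Bool.noConfusion hfalse
  · -- counting
    have hiR : fpt i ∈ R := (hmem_iff i).2 (self_box1 i j k)
    have hjR : fpt j ∈ R := (hmem_iff j).2 (self_box2 i j k)
    have hkR : fpt k ∈ R := (hmem_iff k).2 (self_box3 i j k)
    have hiP : fpt i ∈ P := Finset.mem_image_of_mem _ (Finset.mem_univ _)
    have hjP : fpt j ∈ P := Finset.mem_image_of_mem _ (Finset.mem_univ _)
    have hkP : fpt k ∈ P := Finset.mem_image_of_mem _ (Finset.mem_univ _)
    have hsub : ({fpt i, fpt j, fpt k} : Set (EuclideanSpace ℝ (Fin 2))) ⊆ R ∩ ↑P := by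
      intro x hx
      rcases hx with rfl | rfl | rfl
      · exact ⟨hiR, hiP⟩
      · exact ⟨hjR, hjP⟩
      · exact ⟨hkR, hkP⟩
    have h3' : ({fpt i, fpt j, fpt k} : Set (EuclideanSpace ℝ (Fin 2))).ncard = 3 :=
      Set.ncard_eq_three.2 ⟨fpt i, fpt j, fpt k, fpt_inj.ne hij, fpt_inj.ne hik,
        fpt_inj.ne hjk, rfl⟩
    have hfin : (R ∩ ↑P).Finite := (P.finite_toSet).inter_of_right R
    have h3le : 3 ≤ (R ∩ ↑P).ncard := by
      rw [← h3']; exact Set.ncard_le_ncard hsub hfin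
    have hlt : ε * P.card < 3 := by
      rw [hPcard]; push_cast; linarith
    calc ε * P.card < 3 := hlt
      _ ≤ ((R ∩ ↑P).ncard : ℝ) := by exact_mod_cast h3le
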